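/- (First Decomposition Lemma, consequence.) Let μ and ν be probability measures on [0,1]² and ε > 0. If |μ(R) − ν(R)| ≤ ε for every axis-parallel rectangle R = [a,b] × [c,d] with a,b,c,d ∈ [0,1], then sup_{q ∈ [0,1]} |E_{(s,b)∼μ}[gft(q,s,b)] − E_{(s,b)∼ν}[gft(q,s,b)]| ≤ 2ε. -/

import Mathlib

open MeasureTheory Set
open scoped ENNReal

/-- Gain from trade: `gft p s b = (b - s) · 𝟙{s ≤ p ≤ b}`. -/
noncomputable def gft (p s b : ℝ) : ℝ := if s ≤ p ∧ p ≤ b then b - s else 0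


namespace FirstDecompAux

def A (q t : ℝ) : Set (ℝ × ℝ) := {x | x.1 ≤ q ∧ q ≤ t ∧ t ≤ x.2}
def B (q t : ℝ) : Set (ℝ × ℝ) := {x | x.1 ≤ t ∧ t ≤ q ∧ q ≤ x.2}

noncomputable def f (q : ℝ) (x : ℝ × ℝ) (t : ℝ) : ℝ :=
  (A q t).indicator (fun _ => (1:ℝ)) x + (B q t).indicator (fun _ => (1:ℝ)) x

lemma measA (q t : ℝ) : MeasurableSet (A q t) := by
  by_cases h : q ≤ t
  · have : A q t = {x : ℝ × ℝ | x.1 ≤ q} ∩ {x : ℝ × ℝ | t ≤ x.2} := by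
      ext x; simp [A, h]
    rw [this]
    exact (measurableSet_le measurable_fst measurable_const).inter
      (measurableSet_le measurable_const measurable_snd)
  · have : A q t = ∅ := by ext x; simp [A, h]
    simp [this]

lemma measB (q t : ℝ) : MeasurableSet (B q t) := by
  by_cases h : t ≤ q
  · have : B q t = {x : ℝ × ℝ | x.1 ≤ t} ∩ {x : ℝ × ℝ | q ≤ x.2} := by
      ext x; simp [B, h]
    rw [this]
    exact (measurableSet_le measurable_fst measurable_const).inter
      (measurableSet_le measurable_const measurable_snd)
  · have : B q t = ∅ := by ext x; simp [B, h]
    simp [this]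

lemma meas_uncurry (q : ℝ) : Measurable (Function.uncurry (f q)) := by
  have hA : MeasurableSet {p : (ℝ × ℝ) × ℝ | p.1.1 ≤ q ∧ q ≤ p.2 ∧ p.2 ≤ p.1.2} :=
    (measurableSet_le (measurable_fst.fst) measurable_const).inter
      ((measurableSet_le measurable_const measurable_snd).inter
        (measurableSet_le measurable_snd (measurable_fst.snd)))
  have hB : MeasurableSet {p : (ℝ × ℝ) × ℝ | p.1.1 ≤ p.2 ∧ p.2 ≤ q ∧ q ≤ p.1.2} :=
    (measurableSet_le (measurable_fst.fst) measurable_snd).inter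
      ((measurableSet_le measurable_snd measurable_const).inter
        (measurableSet_le measurable_const (measurable_fst.snd)))
  have : Function.uncurry (f q) = fun p : (ℝ × ℝ) × ℝ =>
      (if p.1.1 ≤ q ∧ q ≤ p.2 ∧ p.2 ≤ p.1.2 then (1:ℝ) else 0)
      + (if p.1.1 ≤ p.2 ∧ p.2 ≤ q ∧ q ≤ p.1.2 then (1:ℝ) else 0) := by
    ext p
    simp [Function.uncurry, f, A, B, Set.indicator_apply]
  rw [this]
  exact ((measurable_const.ite hA measurable_const).add
    (measurable_const.ite hB measurable_const))

lemma f_bound (q : ℝ) (x : ℝ × ℝ) (t : ℝ) : ‖f q x t‖ ≤ 2 := by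
  unfold f
  by_cases ha : x ∈ A q t <;> by_cases hb : x ∈ B q t <;>
    simp [Set.indicator_apply, ha, hb, Real.norm_eq_abs, abs_le] <;> norm_num

lemma integrable_ind (a b : ℝ) :
    Integrable ((Icc a b).indicator (fun _ => (1:ℝ))) (volume.restrict (Icc (0:ℝ) 1)) :=
  (integrableOn_const measure_Icc_lt_top.ne).indicator measurableSet_Icc

/-- pointwise: for `x` in the square, `∫ t in [0,1], f q x t = gft q x.1 x.2` -/
lemma pointwise (q : ℝ) (hq : q ∈ Icc (0:ℝ) 1) (x : ℝ × ℝ)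
    (hx : x ∈ Icc (0:ℝ) 1 ×ˢ Icc (0:ℝ) 1) :
    ∫ t in Icc (0:ℝ) 1, f q x t = gft q x.1 x.2 := by
  obtain ⟨hx1, hx2⟩ := hx
  have e1 : ∀ t, (A q t).indicator (fun _ => (1:ℝ)) x
      = (if x.1 ≤ q then (Icc q x.2).indicator (fun _ => (1:ℝ)) t else 0) := by
    intro t
    by_cases h1 : x.1 ≤ q <;> simp [A, Set.indicator_apply, h1]
  have e2 : ∀ t, (B q t).indicator (fun _ => (1:ℝ)) x
      = (if q ≤ x.2 then (Icc x.1 q).indicator (fun _ => (1:ℝ)) t else 0) := by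
    intro t
    by_cases h2 : q ≤ x.2 <;> simp [B, Set.indicator_apply, h2, and_comm]
  have key : ∀ a b : ℝ, 0 ≤ a → b ≤ 1 →
      ∫ t in Icc (0:ℝ) 1, (Icc a b).indicator (fun _ => (1:ℝ)) t = max (b - a) 0 := by
    intro a b ha hb
    rw [setIntegral_indicator measurableSet_Icc, setIntegral_const, Icc_inter_Icc]
    have h1 : (0:ℝ) ⊔ a = a := sup_eq_right.mpr ha
    have h2 : (1:ℝ) ⊓ b = b := inf_eq_right.mpr hb
    simp only [h1, h2, measureReal_def, Real.volume_Icc, smul_eq_mul, mul_one]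
    rcases le_or_gt a b with h | h
    · rw [ENNReal.toReal_ofReal (by linarith), max_eq_left (by linarith)]
    · rw [ENNReal.ofReal_eq_zero.mpr (by linarith), max_eq_right (by linarith)]
      simp
  have hint1 : Integrable (fun t => if x.1 ≤ q then (Icc q x.2).indicator (fun _ => (1:ℝ)) t else 0)
      (volume.restrict (Icc (0:ℝ) 1)) := by
    by_cases h1 : x.1 ≤ q <;> simp only [h1, if_true, if_false]
    · exact integrable_ind q x.2
    · exact integrable_const 0
  have hint2 : Integrable (fun t => if q ≤ x.2 then (Icc x.1 q).indicator (fun _ => (1:ℝ)) t else 0)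
      (volume.restrict (Icc (0:ℝ) 1)) := by
    by_cases h2 : q ≤ x.2 <;> simp only [h2, if_true, if_false]
    · exact integrable_ind x.1 q
    · exact integrable_const 0
  calc ∫ t in Icc (0:ℝ) 1, f q x t
      = ∫ t in Icc (0:ℝ) 1,
        ((if x.1 ≤ q then (Icc q x.2).indicator (fun _ => (1:ℝ)) t else 0)
        + (if q ≤ x.2 then (Icc x.1 q).indicator (fun _ => (1:ℝ)) t else 0)) := by
        refine setIntegral_congr_fun measurableSet_Icc (fun t _ => ?_)
        rw [f, e1 t, e2 t]
    _ = gft q x.1 x.2 := by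
        rw [integral_add hint1 hint2]
        by_cases h1 : x.1 ≤ q <;> by_cases h2 : q ≤ x.2 <;>
          simp only [h1, h2, if_true, if_false, integral_zero, gft]
        · rw [key q x.2 hq.1 hx2.2, key x.1 q hx1.1 hq.2,
            max_eq_left (by linarith), max_eq_left (by linarith), if_pos ⟨trivial, trivial⟩]
          ring
        · rw [key q x.2 hq.1 hx2.2, max_eq_right (by linarith), if_neg (by tauto)]
          simp
        · rw [key x.1 q hx1.1 hq.2, max_eq_right (by linarith), if_neg (by tauto)]
          simp
        · rw [if_neg (by tauto)]
          simp


section Main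

variable (q : ℝ)

def Sq : Set (ℝ × ℝ) := Icc (0:ℝ) 1 ×ˢ Icc (0:ℝ) 1

lemma measS : MeasurableSet Sq := measurableSet_Icc.prod measurableSet_Icc

noncomputable def g (q : ℝ) (m : Measure (ℝ × ℝ)) (t : ℝ) : ℝ :=
  (m (A q t ∩ Sq)).toReal + (m (B q t ∩ Sq)).toReal

lemma inner_integral (m : Measure (ℝ × ℝ)) [IsProbabilityMeasure m] (t : ℝ) :
    ∫ x, f q x t ∂(m.restrict Sq) = g q m t := by
  have i1 : Integrable ((A q t).indicator (fun _ => (1:ℝ))) (m.restrict Sq) :=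
    (integrable_const (1:ℝ)).indicator (measA q t)
  have i2 : Integrable ((B q t).indicator (fun _ => (1:ℝ))) (m.restrict Sq) :=
    (integrable_const (1:ℝ)).indicator (measB q t)
  rw [show (fun x => f q x t) = fun x =>
      (A q t).indicator (fun _ => (1:ℝ)) x + (B q t).indicator (fun _ => (1:ℝ)) x from rfl,
    integral_add i1 i2, integral_indicator (measA q t), integral_indicator (measB q t),
    setIntegral_const, setIntegral_const, measureReal_restrict_apply (measA q t),
    measureReal_restrict_apply (measB q t)]
  simp [g, measureReal_def]

lemma fubini_int (m : Measure (ℝ × ℝ)) [IsProbabilityMeasure m] :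
    Integrable (Function.uncurry (f q)) ((m.restrict Sq).prod (volume.restrict (Icc (0:ℝ) 1))) := by
  have : IsFiniteMeasure (volume.restrict (Icc (0:ℝ) 1)) := by infer_instance
  refine Integrable.mono' (integrable_const 2) (meas_uncurry q).aestronglyMeasurable
    (ae_of_all _ fun p => ?_)
  exact f_bound q p.1 p.2

lemma integrable_g (m : Measure (ℝ × ℝ)) [IsProbabilityMeasure m] :
    Integrable (g q m) (volume.restrict (Icc (0:ℝ) 1)) := by
  have h := (fubini_int q m).integral_prod_right
  refine h.congr (ae_of_all _ fun t => ?_)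
  exact inner_integral q m t

lemma integral_gft (hq : q ∈ Icc (0:ℝ) 1) (m : Measure (ℝ × ℝ)) [IsProbabilityMeasure m]
    (hm : m Sq = 1) :
    ∫ x, gft q x.1 x.2 ∂m = ∫ t in Icc (0:ℝ) 1, g q m t := by
  have hc : m Sqᶜ = 0 := by
    rw [measure_compl (measS) (measure_ne_top m _), hm, measure_univ]
    simp
  have hae : ∀ᵐ x ∂m, x ∈ Sq := by
    rw [ae_iff]
    exact hc
  have hres : m.restrict Sq = m := Measure.restrict_eq_self_of_ae_mem hae
  calc ∫ x, gft q x.1 x.2 ∂m = ∫ x, gft q x.1 x.2 ∂(m.restrict Sq) := by rw [hres]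
    _ = ∫ x, (∫ t in Icc (0:ℝ) 1, f q x t) ∂(m.restrict Sq) := by
        refine integral_congr_ae ?_
        filter_upwards [ae_restrict_mem measS] with x hx
        exact (pointwise q hq x hx).symm
    _ = ∫ t in Icc (0:ℝ) 1, ∫ x, f q x t ∂(m.restrict Sq) :=
        integral_integral_swap (fubini_int q m)
    _ = ∫ t in Icc (0:ℝ) 1, g q m t := by
        refine integral_congr_ae (ae_of_all _ fun t => ?_)
        exact inner_integral q m t

lemma A_inter (t : ℝ) (hq : q ∈ Icc (0:ℝ) 1) (ht : t ∈ Icc (0:ℝ) 1) (h : q ≤ t) :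
    A q t ∩ Sq = Icc 0 q ×ˢ Icc t 1 := by
  ext x
  simp only [A, Sq, mem_inter_iff, mem_setOf_eq, mem_prod, mem_Icc]
  constructor
  · rintro ⟨⟨h1, _, h3⟩, ⟨h4, _⟩, _, h7⟩
    exact ⟨⟨h4, h1⟩, h3, h7⟩
  · rintro ⟨⟨h1, h2⟩, h3, h4⟩
    exact ⟨⟨h2, h, h3⟩, ⟨h1, le_trans h2 hq.2⟩, le_trans ht.1 h3, h4⟩

lemma A_empty (t : ℝ) (h : ¬ q ≤ t) : A q t = ∅ := by ext x; simp [A, h]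

lemma B_inter (t : ℝ) (hq : q ∈ Icc (0:ℝ) 1) (ht : t ∈ Icc (0:ℝ) 1) (h : t ≤ q) :
    B q t ∩ Sq = Icc 0 t ×ˢ Icc q 1 := by
  ext x
  simp only [B, Sq, mem_inter_iff, mem_setOf_eq, mem_prod, mem_Icc]
  constructor
  · rintro ⟨⟨h1, _, h3⟩, ⟨h4, _⟩, _, h7⟩
    exact ⟨⟨h4, h1⟩, h3, h7⟩
  · rintro ⟨⟨h1, h2⟩, h3, h4⟩
    exact ⟨⟨h2, h, h3⟩, ⟨h1, le_trans h2 ht.2⟩, le_trans hq.1 h3, h4⟩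

end Main

end FirstDecompAux


open FirstDecompAux in
/-- **First Decomposition Lemma (consequence).**
If two probability measures `μ, ν` on `[0,1]²` agree up to `ε` on all axis-parallel
rectangles `[a,b] × [c,d]` with corners in `[0,1]`, then their expected gains from trade
are uniformly within `2ε` of each other over all prices `q ∈ [0,1]`. -/
theorem first_decomposition_consequence
    (μ ν : Measure (ℝ × ℝ)) [IsProbabilityMeasure μ] [IsProbabilityMeasure ν]
    (hμ : μ (Icc (0:ℝ) 1 ×ˢ Icc (0:ℝ) 1) = 1)
    (hν : ν (Icc (0:ℝ) 1 ×ˢ Icc (0:ℝ) 1) = 1)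
    (ε : ℝ) (hε : 0 < ε)
    (hrect : ∀ a b c d : ℝ, a ∈ Icc (0:ℝ) 1 → b ∈ Icc (0:ℝ) 1 →
      c ∈ Icc (0:ℝ) 1 → d ∈ Icc (0:ℝ) 1 →
      |(μ (Icc a b ×ˢ Icc c d)).toReal - (ν (Icc a b ×ˢ Icc c d)).toReal| ≤ ε) :
    ∀ q ∈ Icc (0:ℝ) 1,
      |(∫ x, gft q x.1 x.2 ∂μ) - ∫ x, gft q x.1 x.2 ∂ν| ≤ 2 * ε := by
  intro q hq
  rw [integral_gft q hq μ hμ, integral_gft q hq ν hν,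
    ← integral_sub (integrable_g q μ) (integrable_g q ν)]
  have bound : ∀ t ∈ Icc (0:ℝ) 1, ‖g q μ t - g q ν t‖ ≤ 2 * ε := by
    intro t ht
    have pA : |(μ (A q t ∩ Sq)).toReal - (ν (A q t ∩ Sq)).toReal| ≤ ε := by
      by_cases h : q ≤ t
      · rw [A_inter q t hq ht h]
        exact hrect 0 q t 1 (by norm_num) hq ht (by norm_num)
      · rw [A_empty q t h]
        simp [hε.le]
    have pB : |(μ (B q t ∩ Sq)).toReal - (ν (B q t ∩ Sq)).toReal| ≤ ε := by
      by_cases h : t ≤ q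
      · rw [B_inter q t hq ht h]
        exact hrect 0 t q 1 (by norm_num) ht hq (by norm_num)
      · rw [show B q t = ∅ by ext x; simp [B, h]]
        simp [hε.le]
    have he : g q μ t - g q ν t =
        ((μ (A q t ∩ Sq)).toReal - (ν (A q t ∩ Sq)).toReal)
        + ((μ (B q t ∩ Sq)).toReal - (ν (B q t ∩ Sq)).toReal) := by
      unfold g; ring
    rw [Real.norm_eq_abs, he]
    calc |_ + _| ≤ _ + _ := abs_add_le _ _
      _ ≤ 2 * ε := by linarith
  have := norm_setIntegral_le_of_norm_le_const (μ := volume) (s := Icc (0:ℝ) 1)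
    (f := fun t => g q μ t - g q ν t) measure_Icc_lt_top bound
  rw [Real.norm_eq_abs] at this
  refine this.trans ?_
  rw [Real.volume_real_Icc]
  norm_num
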